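/- In the group G = GL_2(W) ⋊ C₂, the elements ω and φ satisfy ω⁸ = 1, φ² = 1 and φ·ω·φ⁻¹ = ω³, and the subgroup of G generated by ω and φ has exactly 16 elements; that is, ⟨ω, φ⟩ is isomorphic to the semidihedral group SD₁₆ of order 16 (the group with presentation ⟨r, s | r⁸ = s² = 1, s r s⁻¹ = r³⟩). -/

import Mathlib

open Matrix

/-- `𝔽₉`, the field with nine elements. -/
abbrev F9 : Type := GaloisField 3 2

/-- `W = 𝕎(𝔽₉)`, the ring of Witt vectors of `𝔽₉`. -/
abbrev Wq : Type := WittVector 3 F9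

/-- `σ`, the Frobenius automorphism of `W = 𝕎(𝔽₉)`. -/
noncomputable def σW : Wq ≃+* Wq := WittVector.frobeniusEquiv 3 F9

/-- `ι : W → M₂(W)`, `ι(x) = diag(x, σ(x))`. -/
noncomputable def iw (x : Wq) : Matrix (Fin 2) (Fin 2) Wq := !![x, 0; 0, σW x]

/-- `φ`, the ring automorphism of `M₂(W)` applying `σ` to each matrix entry. -/
noncomputable def φM : Matrix (Fin 2) (Fin 2) Wq ≃+* Matrix (Fin 2) (Fin 2) Wq :=
  σW.mapMatrix

/-- The cyclic group of order two. -/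
abbrev C2 : Type := Multiplicative (ZMod 2)

/-- The defining relations of the semidihedral group `SD₁₆`:
`⟨r, s | r⁸ = s² = 1, s r s⁻¹ = r³⟩`, with `r` the generator `0` and `s` the
generator `1`. -/
def sdRels : Set (FreeGroup (Fin 2)) :=
  {FreeGroup.of 0 ^ 8, FreeGroup.of 1 ^ 2,
   FreeGroup.of 1 * FreeGroup.of 0 * (FreeGroup.of 1)⁻¹ * (FreeGroup.of 0 ^ 3)⁻¹}

namespace SD16aux

abbrev P : Type := PresentedGroup sdRels

def rP : P := PresentedGroup.of 0
def sP : P := PresentedGroup.of 1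

lemma mk_rel {x : FreeGroup (Fin 2)} (hx : x ∈ sdRels) : PresentedGroup.mk sdRels x = 1 :=
  (QuotientGroup.eq_one_iff x).mpr (Subgroup.subset_normalClosure hx)

lemma r8 : rP ^ 8 = 1 := by
  have h := mk_rel (show FreeGroup.of 0 ^ 8 ∈ sdRels by left; rfl)
  simpa [rP, PresentedGroup.of, map_pow] using h

lemma s2 : sP ^ 2 = 1 := by
  have h := mk_rel (show FreeGroup.of 1 ^ 2 ∈ sdRels by right; left; rfl)
  simpa [sP, PresentedGroup.of, map_pow] using h

lemma rel3 : sP * rP * sP⁻¹ = rP ^ 3 := by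
  have h := mk_rel (show FreeGroup.of 1 * FreeGroup.of 0 * (FreeGroup.of 1)⁻¹ *
      (FreeGroup.of 0 ^ 3)⁻¹ ∈ sdRels by right; right; rfl)
  simp only [_root_.map_mul, _root_.map_inv, _root_.map_pow] at h
  rw [mul_inv_eq_one] at h
  simpa [rP, sP, PresentedGroup.of] using h

lemma pow_mod_of_pow_eq_one {G : Type*} [Group G] {g : G} {k : ℕ} (hk : g ^ k = 1) (n : ℕ) :
    g ^ n = g ^ (n % k) := by
  conv_lhs => rw [← Nat.div_add_mod n k, pow_add, pow_mul, hk, one_pow, one_mul]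

lemma s_mul_r_pow (n : ℕ) : sP * rP ^ n = rP ^ (3 * n) * sP := by
  induction n with
  | zero => simp
  | succ n ih =>
    have h1 : sP * rP = rP ^ 3 * sP := by
      rw [← rel3]; group
    calc sP * rP ^ (n + 1) = (sP * rP ^ n) * rP := by rw [pow_succ, mul_assoc]
    _ = rP ^ (3 * n) * (sP * rP) := by rw [ih, mul_assoc]
    _ = rP ^ (3 * n) * (rP ^ 3 * sP) := by rw [h1]
    _ = rP ^ (3 * (n + 1)) * sP := by rw [← mul_assoc, ← pow_add, Nat.mul_add, Nat.mul_one]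

noncomputable def R (i : ZMod 8) : P := rP ^ i.val
noncomputable def S (j : ZMod 2) : P := sP ^ j.val

lemma R_add (i j : ZMod 8) : R (i + j) = R i * R j := by
  rw [R, R, R, ← pow_add, pow_mod_of_pow_eq_one r8 (i.val + j.val), ZMod.val_add]

lemma S_add (i j : ZMod 2) : S (i + j) = S i * S j := by
  rw [S, S, S, ← pow_add, pow_mod_of_pow_eq_one s2 (i.val + j.val), ZMod.val_add]

lemma R_zero : R 0 = 1 := by simp [R]
lemma S_zero : S 0 = 1 := by simp [S]

lemma S_mul_R (j : ZMod 2) (i : ZMod 8) : S j * R i = R (3 ^ j.val * i) * S j := by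
  fin_cases j
  · show S 0 * R i = R (3 ^ (0 : ZMod 2).val * i) * S 0
    simp [S_zero]
  · show S 1 * R i = R (3 ^ (1 : ZMod 2).val * i) * S 1
    have hv : (1 : ZMod 2).val = 1 := rfl
    have hval : (3 * i : ZMod 8).val = 3 * i.val % 8 := by
      rw [ZMod.val_mul]
      congr 1
    rw [hv, pow_one, S, hv, pow_one, R, s_mul_r_pow, R, hval,
      ← pow_mod_of_pow_eq_one r8 (3 * i.val)]

noncomputable def F (p : ZMod 8 × ZMod 2) : P := R p.1 * S p.2

lemma F_mul (a c : ZMod 8) (b d : ZMod 2) :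
    F (a, b) * F (c, d) = F (a + 3 ^ b.val * c, b + d) := by
  show (R a * S b) * (R c * S d) = R (a + 3 ^ b.val * c) * S (b + d)
  rw [R_add, S_add, mul_assoc, ← mul_assoc (S b), S_mul_R, mul_assoc, mul_assoc]

noncomputable def Hrange : Subgroup P where
  carrier := Set.range F
  one_mem' := ⟨(0, 0), by simp [F, R_zero, S_zero]⟩
  mul_mem' := by
    rintro _ _ ⟨⟨a, b⟩, rfl⟩ ⟨⟨c, d⟩, rfl⟩
    exact ⟨(a + 3 ^ b.val * c, b + d), (F_mul a c b d).symm⟩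
  inv_mem' := by
    rintro _ ⟨⟨a, b⟩, rfl⟩
    have hb : -b = b := CharTwo.neg_eq b
    refine ⟨(-(3 ^ b.val * a), -b), eq_inv_of_mul_eq_one_left ?_⟩
    show F (-(3 ^ b.val * a), -b) * F (a, b) = 1
    rw [F_mul, hb]
    simp [F, R_zero, S_zero, CharTwo.add_self_eq_zero]

lemma F_surjective : Function.Surjective F := by
  intro x
  refine PresentedGroup.generated_by sdRels Hrange (fun j => ?_) x
  fin_cases j
  · exact ⟨(1, 0), by simp [F, S_zero, R]; rfl⟩
  · exact ⟨(0, 1), by simp [F, R_zero, S]; rfl⟩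

lemma finiteP : Finite P := Finite.of_surjective F F_surjective

lemma cardP_le : Nat.card P ≤ 16 := by
  have h := Nat.card_le_card_of_surjective F F_surjective
  simpa using h

/-- powers of a 2×2 diagonal matrix -/
lemma diag_pow {α : Type*} [CommRing α] (a b : α) (n : ℕ) :
    (!![a, 0; 0, b]) ^ n = !![a ^ n, 0; 0, b ^ n] := by
  induction n with
  | zero => simp [Matrix.one_fin_two]
  | succ n ih => rw [pow_succ, ih, Matrix.mul_fin_two]; simp [pow_succ]

lemma two_ne_zero_Wq : (2 : Wq) ≠ 0 := by
  intro h
  have h2 : (2 : F9) = 0 := by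
    have := congrArg (WittVector.constantCoeff : Wq →+* F9) h
    simpa only [map_ofNat, map_zero] using this
  have h3 : ((2 : ℕ) : F9) = 0 := by exact_mod_cast h2
  rw [CharP.cast_eq_zero_iff F9 3 2] at h3
  omega

end SD16aux

/-- in `G = GL₂(W) ⋊ C₂`, the elements `ω` and `φ` satisfy `ω⁸ = 1`,
`φ² = 1` and `φωφ⁻¹ = ω³`, and the subgroup they generate has exactly `16` elements;
it is isomorphic to the semidihedral group `SD₁₆ = ⟨r, s | r⁸ = s² = 1, s r s⁻¹ = r³⟩`. -/
theorem statement4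
    (ω₀ : Wq) (hω₀ : ω₀ ^ 4 = -1) (hσω₀ : σW ω₀ = ω₀ ^ 3)
    (θ : C2 →* MulAut (GL (Fin 2) Wq))
    (hθ : θ (Multiplicative.ofAdd 1) = Units.mapEquiv φM.toMulEquiv)
    (ωu : GL (Fin 2) Wq) (hωu : (ωu : Matrix (Fin 2) (Fin 2) Wq) = iw ω₀)
    (ωG φG : GL (Fin 2) Wq ⋊[θ] C2)
    (hωG : ωG = SemidirectProduct.inl ωu)
    (hφG : φG = SemidirectProduct.inr (Multiplicative.ofAdd 1)) :
    ωG ^ 8 = 1 ∧ φG ^ 2 = 1 ∧ φG * ωG * φG⁻¹ = ωG ^ 3 ∧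
    Nat.card (Subgroup.closure {ωG, φG}) = 16 ∧
    Nonempty ((Subgroup.closure {ωG, φG}) ≃* PresentedGroup sdRels) := by
  have hω₀8 : ω₀ ^ 8 = 1 := by
    have : ω₀ ^ 8 = (ω₀ ^ 4) ^ 2 := by ring
    rw [this, hω₀, neg_one_sq]
  have hiw : iw ω₀ = !![ω₀, 0; 0, ω₀ ^ 3] := by rw [iw, hσω₀]
  -- ωu ^ 8 = 1
  have hωu8 : ωu ^ 8 = 1 := by
    apply Units.ext
    rw [Units.val_pow_eq_pow_val, hωu, hiw, SD16aux.diag_pow]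
    have h24 : (ω₀ ^ 3) ^ 8 = 1 := by
      rw [← pow_mul, show 3 * 8 = 8 * 3 from rfl, pow_mul, hω₀8, one_pow]
    rw [hω₀8, h24, Units.val_one, Matrix.one_fin_two]
  -- ωu ^ 4 ≠ 1
  have hωu4 : ωu ^ 4 ≠ 1 := by
    intro h
    have hv := congrArg (fun u : GL (Fin 2) Wq => (u : Matrix (Fin 2) (Fin 2) Wq) 0 0) h
    simp only [Units.val_pow_eq_pow_val, hωu, hiw, SD16aux.diag_pow, Units.val_one] at hv
    rw [hω₀] at hv
    have : (-1 : Wq) = 1 := by simpa [Matrix.one_fin_two] using hv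
    apply SD16aux.two_ne_zero_Wq
    linear_combination -this
  have hordωu : orderOf ωu = 8 := by
    have := orderOf_eq_prime_pow (p := 2) (n := 2) (x := ωu) (by norm_num [hωu4]) (by norm_num [hωu8])
    simpa using this
  -- part 1
  have part1 : ωG ^ 8 = 1 := by
    rw [hωG, ← _root_.map_pow, hωu8, _root_.map_one]
  -- part 2
  have hc2 : (Multiplicative.ofAdd (1 : ZMod 2)) ^ 2 = 1 := by decide
  have part2 : φG ^ 2 = 1 := by
    rw [hφG, ← _root_.map_pow, hc2, _root_.map_one]
  -- part 3
  have hmap : Units.mapEquiv φM.toMulEquiv ωu = ωu ^ 3 := by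
    apply Units.ext
    rw [Units.val_pow_eq_pow_val, Units.coe_mapEquiv]
    change φM ((ωu : Matrix (Fin 2) (Fin 2) Wq)) = _
    rw [hωu, hiw, φM, RingEquiv.mapMatrix_apply, SD16aux.diag_pow]
    ext i j
    fin_cases i <;> fin_cases j <;>
      simp [Matrix.map_apply, hσω₀, _root_.map_pow, ← pow_mul]
  have part3 : φG * ωG * φG⁻¹ = ωG ^ 3 := by
    rw [hωG, hφG, ← _root_.map_pow, ← hmap, ← hθ, SemidirectProduct.inl_aut, _root_.map_inv]
  -- the homomorphism from the presented group
  have hrels : ∀ x ∈ sdRels, FreeGroup.lift (![ωG, φG] : Fin 2 → _) x = 1 := by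
    intro x hx
    rcases hx with rfl | rfl | rfl
    · simpa [_root_.map_pow] using part1
    · simpa [_root_.map_pow] using part2
    · simp only [_root_.map_mul, _root_.map_inv, _root_.map_pow, FreeGroup.lift_apply_of]
      simp only [Matrix.cons_val_zero, Matrix.cons_val_one, Matrix.head_cons]
      rw [mul_inv_eq_one]
      exact part3
  set f : SD16aux.P →* (GL (Fin 2) Wq ⋊[θ] C2) := PresentedGroup.toGroup hrels with hf
  have hfr : f SD16aux.rP = ωG := by
    rw [hf]
    exact PresentedGroup.toGroup.of hrels
  have hfs : f SD16aux.sP = φG := by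
    rw [hf]
    exact PresentedGroup.toGroup.of hrels
  have hrange : f.range = Subgroup.closure {ωG, φG} := by
    rw [MonoidHom.range_eq_map, ← PresentedGroup.closure_range_of sdRels,
      MonoidHom.map_closure]
    congr 1
    rw [← Set.range_comp]
    ext x
    simp only [Set.mem_insert_iff, Set.mem_singleton_iff]
    constructor
    · rintro ⟨i, rfl⟩
      fin_cases i
      · left; exact hfr
      · right; exact hfs
    · rintro (rfl | rfl)
      · exact ⟨0, hfr⟩
      · exact ⟨1, hfs⟩
  have finP : Finite SD16aux.P := SD16aux.finiteP
  have finRange : Finite f.range := Finite.of_surjective _ f.rangeRestrict_surjective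
  -- the sixteen elements are distinct
  have hordωG : orderOf ωG = 8 := by
    rw [hωG, orderOf_injective SemidirectProduct.inl SemidirectProduct.inl_injective, hordωu]
  have hJinj : Function.Injective
      (fun p : Fin 8 × Fin 2 => ωG ^ (p.1 : ℕ) * φG ^ (p.2 : ℕ)) := by
    intro ⟨a, b⟩ ⟨c, d⟩ h
    simp only at h
    -- separate the right components
    have hright := congrArg SemidirectProduct.rightHom h
    simp only [_root_.map_mul, _root_.map_pow, hωG, hφG, SemidirectProduct.rightHom_inl,
      SemidirectProduct.rightHom_inr, one_pow, one_mul] at hright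
    have hordc : orderOf (Multiplicative.ofAdd (1 : ZMod 2)) = 2 :=
      orderOf_eq_prime (by decide) (by decide)
    have hbd : b = d := Fin.ext (pow_injOn_Iio_orderOf
      (by rw [hordc]; exact Set.mem_Iio.mpr b.isLt)
      (by rw [hordc]; exact Set.mem_Iio.mpr d.isLt) hright)
    subst hbd
    have hl : ωG ^ (a : ℕ) = ωG ^ (c : ℕ) := mul_right_cancel h
    have := pow_injOn_Iio_orderOf (x := ωG)
      (by rw [hordωG]; exact Set.mem_Iio.mpr a.isLt)
      (by rw [hordωG]; exact Set.mem_Iio.mpr c.isLt) hl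
    exact Prod.ext (Fin.ext this) rfl
  have hmem : ∀ p : Fin 8 × Fin 2, ωG ^ (p.1 : ℕ) * φG ^ (p.2 : ℕ) ∈ f.range := by
    intro p
    rw [hrange]
    exact mul_mem (pow_mem (Subgroup.subset_closure (by left; rfl)) _)
      (pow_mem (Subgroup.subset_closure (by right; rfl)) _)
  have hge : 16 ≤ Nat.card f.range := by
    have hinj : Function.Injective
        (fun p : Fin 8 × Fin 2 => (⟨ωG ^ (p.1 : ℕ) * φG ^ (p.2 : ℕ), hmem p⟩ : f.range)) := by
      intro p q hpq
      exact hJinj (congrArg Subtype.val hpq)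
    have := Nat.card_le_card_of_injective _ hinj
    simpa using this
  have hle : Nat.card f.range ≤ Nat.card SD16aux.P :=
    Nat.card_le_card_of_surjective f.rangeRestrict f.rangeRestrict_surjective
  have hcard16 : Nat.card f.range = 16 :=
    le_antisymm (hle.trans SD16aux.cardP_le) hge
  have hcardP : Nat.card SD16aux.P = 16 :=
    le_antisymm SD16aux.cardP_le (hge.trans hle)
  have hbij : Function.Bijective f.rangeRestrict :=
    (Nat.bijective_iff_surjective_and_card _).mpr
      ⟨f.rangeRestrict_surjective, by rw [hcardP, hcard16]⟩
  have iso : SD16aux.P ≃* f.range := MulEquiv.ofBijective f.rangeRestrict hbij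
  refine ⟨part1, part2, part3, ?_, ⟨(MulEquiv.subgroupCongr hrange.symm).trans iso.symm⟩⟩
  rw [← hrange]
  exact hcard16
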